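/- arXiv:1707.01403 — 2 statements merged into one kernel-verified Lean document; each statement's English description precedes it below -/
import Mathlib

section
/- For n ≥ 1 and nonnegative integers p, q, p', q', the system (q - p)² = (q' - p')² and n(p² + q²) + 2pq + n(p + q) = n(p'² + q'²) + 2p'q' + n(p' + q') holds if and only if (p, q) = (p', q') or (p, q) = (q', p'). -/
theorem stmt_1 (n : ℕ) (hn : 1 ≤ n) (p q p' q' : ℕ) :
    (((q : ℤ) - p) ^ 2 = ((q' : ℤ) - p') ^ 2 ∧
      n * (p ^ 2 + q ^ 2) + 2 * p * q + n * (p + q)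
        = n * (p' ^ 2 + q' ^ 2) + 2 * p' * q' + n * (p' + q'))
    ↔ ((p, q) = (p', q') ∨ (p, q) = (q', p')) := by
  constructor
  · rintro ⟨h1, h2⟩
    have h2' : (n : ℤ) * ((p : ℤ) ^ 2 + (q : ℤ) ^ 2) + 2 * p * q + n * (p + q)
        = (n : ℤ) * ((p' : ℤ) ^ 2 + (q' : ℤ) ^ 2) + 2 * p' * q' + n * (p' + q') := by
      exact_mod_cast h2
    have hn' : (1 : ℤ) ≤ (n : ℤ) := by exact_mod_cast hn
    have hfac : (((p : ℤ) + q) - ((p' : ℤ) + q')) *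
        (((n : ℤ) + 1) * (((p : ℤ) + q) + ((p' : ℤ) + q')) + 2 * n) = 0 := by
      linear_combination 2 * h2' - ((n : ℤ) - 1) * h1
    have hs : (p : ℤ) + q = (p' : ℤ) + q' := by
      rcases mul_eq_zero.mp hfac with h | h
      · linarith
      · have hp : (0 : ℤ) ≤ (p : ℤ) := Int.natCast_nonneg p
        have hq : (0 : ℤ) ≤ (q : ℤ) := Int.natCast_nonneg q
        have hp' : (0 : ℤ) ≤ (p' : ℤ) := Int.natCast_nonneg p'
        have hq' : (0 : ℤ) ≤ (q' : ℤ) := Int.natCast_nonneg q'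
        nlinarith
    have hd : (((q : ℤ) - p) - ((q' : ℤ) - p')) * (((q : ℤ) - p) + ((q' : ℤ) - p')) = 0 := by
      linear_combination h1
    simp only [Prod.mk.injEq]
    rcases mul_eq_zero.mp hd with h | h
    · left; omega
    · right; omega
  · rintro (h | h) <;> simp only [Prod.mk.injEq] at h <;> obtain ⟨rfl, rfl⟩ := h <;>
      exact ⟨by ring, by ring⟩
end

section
/- For every integer n ≥ 2 there exist distinct pairs of nonnegative integers (x, y) ≠ (x', y') with q(x, y) = q(x', y'), where q(x, y) = 4nx + 2x² + 8ny + 4xy + 4y² − 4x − 10y; explicitly, for n ≥ 3 one may take (x, y) = (n + 3, 0) and (x', y') = (n − 3, 4). -/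
/-- Freudenthal eigenvalue for Cartan type B I. -/
def qBI (n x y : ℤ) : ℤ := 4 * n * x + 2 * x ^ 2 + 8 * n * y + 4 * x * y + 4 * y ^ 2 - 4 * x - 10 * y

theorem stmt_8 :
    (∀ n : ℤ, 2 ≤ n → ∃ x y x' y' : ℤ, 0 ≤ x ∧ 0 ≤ y ∧ 0 ≤ x' ∧ 0 ≤ y' ∧
      (x, y) ≠ (x', y') ∧ qBI n x y = qBI n x' y') ∧
    (∀ n : ℤ, 3 ≤ n → qBI n (n + 3) 0 = qBI n (n - 3) 4) := by
  constructor
  · intro n hn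
    rcases eq_or_lt_of_le hn with h | h
    · refine ⟨0, 5, 6, 1, by norm_num, by norm_num, by norm_num, by norm_num, by decide, ?_⟩
      rw [← h]; decide
    · refine ⟨n + 3, 0, n - 3, 4, by omega, by norm_num, by omega, by norm_num, ?_, by simp [qBI]; ring⟩
      simp only [ne_eq, Prod.mk.injEq, not_and]
      intro h'; omega
  · intro n _; simp [qBI]; ring
end
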